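/- Let n ≥ 3 and let V = Fin n → ZMod 2. Let T ≤ Perm(V) be the subgroup of all translations x ↦ v + x for v ∈ V (the image of the regular representation of V). Then the normalizer of T in Perm(V) is contained in alternatingGroup(V). -/

import Mathlib

open Equiv

-- helper facts about ZMod 2
lemma zmod2_add_self : ∀ a : ZMod 2, a + a = 0 := by decide

lemma zmod2_cases : ∀ a : ZMod 2, a = 0 ∨ a = 1 := by decide

-- Lemma A: an involution whose support has cardinality divisible by 4 is even
lemma sign_eq_one_of_involution {α : Type*} [DecidableEq α] [Fintype α]
    (σ : Equiv.Perm α) (h2 : σ * σ = 1) (h4 : 4 ∣ σ.support.card) :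
    Equiv.Perm.sign σ = 1 := by
  have ho : orderOf σ ∣ 2 := orderOf_dvd_of_pow_eq_one (by rwa [pow_two])
  have hall : ∀ m ∈ σ.cycleType, m = 2 := fun m hm =>
    le_antisymm (Nat.le_of_dvd two_pos ((Equiv.Perm.dvd_of_mem_cycleType hm).trans ho))
      (Equiv.Perm.two_le_of_mem_cycleType hm)
  have hrep : σ.cycleType = Multiset.replicate (Multiset.card σ.cycleType) 2 :=
    Multiset.eq_replicate_card.2 hall
  set k := Multiset.card σ.cycleType with hk
  have hsum : σ.cycleType.sum = 2 * k := by
    rw [hrep]; simp [Multiset.sum_replicate, mul_comm]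
  have hsupp : σ.support.card = 2 * k := by rw [← Equiv.Perm.sum_cycleType, hsum]
  have hkeven : 2 ∣ k := by omega
  rw [Equiv.Perm.sign_of_cycleType, hsum, ← hk]
  obtain ⟨m, hm⟩ := hkeven
  exact Even.neg_one_pow ⟨3 * m, by omega⟩

-- Counting: the affine hyperplane `x j = 1` has half the points
lemma card_eval_one {n : ℕ} (j : Fin n) :
    2 * Fintype.card {x : Fin n → ZMod 2 // x j = 1} = 2 ^ n := by
  have key : ∀ a : ZMod 2, ¬ a = 1 → a = 0 := by decide
  have e : {x : Fin n → ZMod 2 // x j = 1} ≃ {x : Fin n → ZMod 2 // ¬ x j = 1} :=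
    { toFun := fun x => ⟨x.1 + Pi.single j 1, by
        simp only [Pi.add_apply, Pi.single_eq_same, x.2]
        decide⟩
      invFun := fun x => ⟨x.1 + Pi.single j 1, by
        simp only [Pi.add_apply, Pi.single_eq_same, key _ x.2]
        decide⟩
      left_inv := fun x => by
        ext k
        simp [add_assoc, zmod2_add_self]
      right_inv := fun x => by
        ext k
        simp [add_assoc, zmod2_add_self] }
  have h1 : Fintype.card {x : Fin n → ZMod 2 // ¬ x j = 1}
      = Fintype.card (Fin n → ZMod 2) - Fintype.card {x : Fin n → ZMod 2 // x j = 1} :=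
    Fintype.card_subtype_compl _
  have h2 := Fintype.card_congr e
  have h3 : Fintype.card {x : Fin n → ZMod 2 // x j = 1} ≤ Fintype.card (Fin n → ZMod 2) :=
    Fintype.card_subtype_le _
  have h4 : Fintype.card (Fin n → ZMod 2) = 2 ^ n := by
    simp [Fintype.card_fun, ZMod.card]
  calc 2 * Fintype.card {x : Fin n → ZMod 2 // x j = 1}
      = Fintype.card {x : Fin n → ZMod 2 // x j = 1}
        + Fintype.card {x : Fin n → ZMod 2 // x j = 1} := two_mul _
    _ = Fintype.card {x : Fin n → ZMod 2 // x j = 1}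
        + (Fintype.card (Fin n → ZMod 2)
          - Fintype.card {x : Fin n → ZMod 2 // x j = 1}) := by rw [← h1, ← h2]
    _ = Fintype.card (Fin n → ZMod 2) := Nat.add_sub_cancel' h3
    _ = 2 ^ n := h4

-- Lemma B: any invertible-matrix permutation of (F₂)ⁿ is even for n ≥ 3
lemma sign_eq_one_of_matrix {n : ℕ} (hn : 3 ≤ n) (M : Matrix (Fin n) (Fin n) (ZMod 2))
    (hdet : M.det ≠ 0) :
    ∀ e : Equiv.Perm (Fin n → ZMod 2), (∀ x, e x = M.mulVec x) → Equiv.Perm.sign e = 1 := by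
  apply Matrix.diagonal_transvection_induction_of_det_ne_zero
    (P := fun M => ∀ e : Equiv.Perm (Fin n → ZMod 2),
      (∀ x, e x = M.mulVec x) → Equiv.Perm.sign e = 1) M hdet
  · -- diagonal case : the matrix must be the identity
    intro D hD e he
    have hD1 : ∀ i, D i = 1 := by
      intro i
      have : D i ≠ 0 := by
        intro h
        apply hD
        rw [Matrix.det_diagonal]
        exact Finset.prod_eq_zero (Finset.mem_univ i) h
      rcases zmod2_cases (D i) with h | h
      · exact absurd h this
      · exact h
    have : e = 1 := by
      ext x
      rw [he x]
      have : Matrix.diagonal D = 1 := by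
        ext i k
        rcases eq_or_ne i k with rfl | h
        · simp [hD1]
        · simp [Matrix.diagonal_apply_ne _ h, Matrix.one_apply_ne h]
      simp [this]
    rw [this]; simp
  · -- transvection case
    intro t e he
    obtain ⟨i, j, hij, c⟩ := t
    have he' : ∀ x, e x = x + Function.update (0 : Fin n → ZMod 2) i (c * x j) := by
      intro x
      rw [he x]
      simp [Matrix.TransvectionStruct.toMatrix, Matrix.transvection, Matrix.add_mulVec,
        Matrix.one_mulVec, Matrix.single_mulVec]
    rcases zmod2_cases c with rfl | rfl
    · have : e = 1 := by
        ext x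
        simp [he' x]
      rw [this]; simp
    · -- c = 1 : involution with support of size 2^(n-1)
      have he'' : ∀ x, e x = x + Function.update (0 : Fin n → ZMod 2) i (x j) := by
        intro x; rw [he' x, one_mul]
      have hji : j ≠ i := Ne.symm hij
      have hvalj : ∀ x : Fin n → ZMod 2,
          (x + Function.update (0 : Fin n → ZMod 2) i (x j)) j = x j := by
        intro x
        simp [Function.update_apply, hji]
      have hinv : e * e = 1 := by
        apply Equiv.ext
        intro x
        simp only [Equiv.Perm.mul_apply, Equiv.Perm.one_apply]
        rw [he'' (e x), he'' x, hvalj]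
        funext k
        by_cases hk : k = i
        · subst hk
          simp [Function.update_apply, hji, zmod2_add_self, add_assoc]
        · simp [Function.update_apply, hk]
      have hsupp : e.support = Finset.univ.filter (fun x => x j = 1) := by
        ext x
        simp only [Equiv.Perm.mem_support, Finset.mem_filter, Finset.mem_univ, true_and]
        rw [he'' x]
        constructor
        · intro h
          rcases zmod2_cases (x j) with h0 | h1
          · exfalso; apply h; funext k
            by_cases hk : k = i
            · subst hk; simp [h0]
            · simp [Function.update_apply, hk]
          · exact h1
        · intro h1 hcon
          have hxi := congrFun hcon i
          simp [h1] at hxi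
      have hcard : e.support.card = Fintype.card {x : Fin n → ZMod 2 // x j = 1} := by
        rw [hsupp, Fintype.card_subtype]
      have h4 : 4 ∣ e.support.card := by
        obtain ⟨m, hm⟩ : ∃ m, n = m + 3 := ⟨n - 3, (Nat.sub_add_cancel hn).symm⟩
        subst hm
        refine ⟨2 ^ m, ?_⟩
        rw [hcard]
        apply Nat.eq_of_mul_eq_mul_left (show 0 < 2 by norm_num)
        rw [card_eval_one j]
        ring
      exact sign_eq_one_of_involution e hinv h4
  · -- product case
    intro A B hA hB PA PB e he
    have hBu : IsUnit B.det := isUnit_iff_ne_zero.mpr hB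
    have hBinv : Invertible B := B.invertibleOfIsUnitDet hBu
    let eB : Equiv.Perm (Fin n → ZMod 2) := (B.toLinearEquiv' hBinv).toEquiv
    have heB : ∀ x, eB x = B.mulVec x := fun x => by
      simp [eB, Matrix.toLinearEquiv', Matrix.toLin'_apply]
    have heA : ∀ x, (e * eB⁻¹) x = A.mulVec x := by
      intro x
      have hx : eB (eB⁻¹ x) = x := Equiv.apply_symm_apply eB x
      calc (e * eB⁻¹) x = e (eB⁻¹ x) := rfl
        _ = (A * B).mulVec (eB⁻¹ x) := he _
        _ = A.mulVec (B.mulVec (eB⁻¹ x)) := by rw [← Matrix.mulVec_mulVec]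
        _ = A.mulVec x := by rw [← heB, hx]
    have h1 := PA (e * eB⁻¹) heA
    have h2 := PB eB heB
    have : e = (e * eB⁻¹) * eB := by group
    rw [this, map_mul, h1, h2, mul_one]

theorem stmt12 (n : ℕ) (hn : 3 ≤ n)
    (T : Subgroup (Equiv.Perm (Fin n → ZMod 2)))
    (hT : ∀ σ : Equiv.Perm (Fin n → ZMod 2),
      σ ∈ T ↔ ∃ v : Fin n → ZMod 2, σ = Equiv.addLeft v) :
    Subgroup.normalizer (T : Set (Equiv.Perm (Fin n → ZMod 2))) ≤ alternatingGroup (Fin n → ZMod 2) := by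
  intro σ hσ
  rw [Equiv.Perm.mem_alternatingGroup]
  have hww : ∀ w : Fin n → ZMod 2, w + w = 0 := fun w => funext fun k => zmod2_add_self _
  -- translations are involutions
  have haddinv : ∀ w : Fin n → ZMod 2,
      (Equiv.addLeft w : Equiv.Perm (Fin n → ZMod 2)) * Equiv.addLeft w = 1 := by
    intro w
    apply Equiv.ext
    intro x
    simp only [Equiv.Perm.mul_apply, Equiv.coe_addLeft, Equiv.Perm.one_apply]
    rw [← add_assoc, hww, zero_add]
  -- translations are even
  have hsign_add : ∀ w : Fin n → ZMod 2,
      Equiv.Perm.sign (Equiv.addLeft w : Equiv.Perm (Fin n → ZMod 2)) = 1 := by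
    intro w
    rcases eq_or_ne w 0 with rfl | hw
    · have h0 : (Equiv.addLeft (0 : Fin n → ZMod 2) : Equiv.Perm (Fin n → ZMod 2)) = 1 :=
        Equiv.ext fun x => by simp
      rw [h0]; simp
    · apply sign_eq_one_of_involution _ (haddinv w)
      have hsupp : (Equiv.addLeft w : Equiv.Perm (Fin n → ZMod 2)).support = Finset.univ := by
        ext x
        simp only [Equiv.Perm.mem_support, Finset.mem_univ, iff_true, Equiv.coe_addLeft]
        intro h
        apply hw
        have h2 := congrArg (fun y => y + x) h
        rw [add_assoc, hww, add_zero] at h2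
        exact h2
      rw [hsupp, Finset.card_univ]
      obtain ⟨m, hm⟩ : ∃ m, n = m + 3 := ⟨n - 3, (Nat.sub_add_cancel hn).symm⟩
      subst hm
      refine ⟨2 ^ (m + 1), ?_⟩
      have : Fintype.card (Fin (m + 3) → ZMod 2) = 2 ^ (m + 3) := by
        simp [Fintype.card_fun, ZMod.card]
      rw [this]
      ring
  -- normalize: compose with a translation so that 0 is fixed
  set v := σ 0 with hv
  set τ : Equiv.Perm (Fin n → ZMod 2) := Equiv.addLeft v * σ with hτdef
  have hτ0 : τ 0 = 0 := by
    have h : τ 0 = v + σ 0 := rfl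
    rw [h, ← hv, hww]
  have hτmem : τ ∈ Subgroup.normalizer (T : Set (Equiv.Perm (Fin n → ZMod 2))) :=
    Subgroup.mul_mem _ (Subgroup.le_normalizer ((hT _).2 ⟨v, rfl⟩)) hσ
  -- τ is additive
  have key : ∀ w x, τ (w + x) = τ w + τ x := by
    intro w
    have hwT : (Equiv.addLeft w : Equiv.Perm (Fin n → ZMod 2)) ∈ T := (hT _).2 ⟨w, rfl⟩
    have hconj := (Subgroup.mem_normalizer_iff.mp hτmem (Equiv.addLeft w)).1 hwT
    obtain ⟨u, hu⟩ := (hT _).1 hconj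
    have happ : ∀ x, τ (w + x) = u + τ x := by
      intro x
      have h := DFunLike.congr_fun hu (τ x)
      simp only [Equiv.Perm.mul_apply, Equiv.Perm.inv_def, Equiv.symm_apply_apply, Equiv.coe_addLeft] at h
      exact h
    have hu' : u = τ w := by
      have := happ 0
      rw [add_zero, hτ0, add_zero] at this
      exact this.symm
    intro x
    rw [happ x, hu']
  -- τ is linear, hence given by an invertible matrix
  let ℓ : (Fin n → ZMod 2) ≃ₗ[ZMod 2] (Fin n → ZMod 2) :=
    AddEquiv.toLinearEquiv (AddEquiv.mk' τ key) (by
      intro c x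
      rcases zmod2_cases c with rfl | rfl
      · simp only [zero_smul]
        exact hτ0

      · simp)
  set M : Matrix (Fin n) (Fin n) (ZMod 2) := LinearMap.toMatrix' ℓ.toLinearMap with hMdef
  have hM : ∀ x, M.mulVec x = τ x := by
    intro x
    calc M.mulVec x = Matrix.toLin' M x := (Matrix.toLin'_apply M x).symm
      _ = ℓ.toLinearMap x := by rw [hMdef, Matrix.toLin'_toMatrix']
      _ = τ x := by rfl
  have hMinv : M * LinearMap.toMatrix' ℓ.symm.toLinearMap = 1 := by
    rw [hMdef, ← LinearMap.toMatrix'_comp]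
    have hcomp : ℓ.toLinearMap ∘ₗ ℓ.symm.toLinearMap = LinearMap.id := by
      ext x
      simp
    rw [hcomp, LinearMap.toMatrix'_id]
  have hdet : M.det ≠ 0 := by
    intro h
    have hd := congrArg Matrix.det hMinv
    rw [Matrix.det_mul, Matrix.det_one, h, zero_mul] at hd
    exact zero_ne_one hd
  have hsτ : Equiv.Perm.sign τ = 1 :=
    sign_eq_one_of_matrix hn M hdet τ (fun x => (hM x).symm)
  have hσeq : σ = (Equiv.addLeft v)⁻¹ * τ := by
    rw [hτdef]; group
  rw [hσeq, map_mul, map_inv, hsign_add v, hsτ, inv_one, one_mul]
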